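/- There is an absolute constant C > 0 such that for all integers k ≥ 1 and f ≥ 1: if H is a finite simple edge-colored graph on n vertices that admits a 2k-blocking set B in which every edge of H appears in at most f pairs of B, then H has at most C·f·n^{1+1/k} edges. -/

import Mathlib

open SimpleGraph Finset
set_option linter.unusedSectionVars false
set_option maxHeartbeats 1000000
open scoped Classical

variable {V : Type} [Fintype V] [DecidableEq V]

lemma stmt7_isPath_concat {G : SimpleGraph V} {u v w : V} {p : G.Walk u v} (hp : p.IsPath)
    (h : G.Adj v w) (hw : w ∉ p.support) : (p.concat h).IsPath := by
  rw [← Walk.isPath_reverse_iff, Walk.reverse_concat]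
  exact Walk.IsPath.cons hp.reverse (by simpa using hw)

lemma stmt7_doublecount {G : SimpleGraph V} (A C : Finset V) :
    ∑ u ∈ A, (C.filter (G.Adj u)).card = ∑ w ∈ C, (A.filter (G.Adj w)).card := by
  simp only [Finset.card_filter]
  rw [Finset.sum_comm]
  congr 1; ext w; congr 1; ext u
  by_cases h : G.Adj u w
  · simp [h, h.symm]
  · rw [if_neg h, if_neg (fun h' => h (G.adj_symm h'))]

lemma stmt7_mem_concat {α : Type*} {l : List α} {a x : α} :
    x ∈ l.concat a ↔ x ∈ l ∨ x = a := by simp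

def stmt7_NSC (G : SimpleGraph V) (k : ℕ) : Prop :=
  ∀ (a : V) (W : G.Walk a a), W.IsCycle → W.length ≤ 2*k → False

lemma stmt7_ball {G : SimpleGraph V} {k D : ℕ} (hk : 1 ≤ k)
    (hns : stmt7_NSC G k) (t : Finset V) (ht : t.Nonempty)
    (hdeg : ∀ v ∈ t, D ≤ (t.filter (G.Adj v)).card) :
    (D - 1)^k ≤ Fintype.card V := by
  classical
  have hcardV : 0 < Fintype.card V := Fintype.card_pos_iff.mpr ⟨ht.choose⟩
  rcases Nat.lt_or_ge D 2 with hD | hD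
  · calc (D-1)^k ≤ 1^k := Nat.pow_le_pow_left (by omega) k
      _ ≤ Fintype.card V := by rw [one_pow]; exact hcardV
  obtain ⟨v₀, hv₀⟩ := ht
  let step : Finset V × Finset V → Finset V × Finset V := fun LB =>
    (t.filter (fun w => w ∉ LB.2 ∧ ∃ u ∈ LB.1, G.Adj u w),
     LB.2 ∪ t.filter (fun w => w ∉ LB.2 ∧ ∃ u ∈ LB.1, G.Adj u w))
  let L : ℕ → Finset V := fun j => (step^[j] ({v₀}, {v₀})).1
  let Bd : ℕ → Finset V := fun j => (step^[j] ({v₀}, {v₀})).2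
  have hL0 : L 0 = {v₀} := rfl
  have hBd0 : Bd 0 = {v₀} := rfl
  have hLs : ∀ j, L (j+1) = t.filter (fun w => w ∉ Bd j ∧ ∃ u ∈ L j, G.Adj u w) := by
    intro j
    show (step^[j+1] _).1 = _
    rw [Function.iterate_succ_apply']
  have hBds : ∀ j, Bd (j+1) = Bd j ∪ L (j+1) := by
    intro j
    rw [hLs j]
    show (step^[j+1] _).2 = _
    rw [Function.iterate_succ_apply']
  have hLB : ∀ j, L j ⊆ Bd j := by
    intro j
    cases j with
    | zero => exact Finset.Subset.refl _
    | succ m => rw [hBds m]; exact Finset.subset_union_right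
  have hBmono : ∀ i j, i ≤ j → Bd i ⊆ Bd j := by
    intro i j hij
    induction j with
    | zero =>
      obtain rfl : i = 0 := Nat.le_zero.mp hij
      exact Finset.Subset.refl _
    | succ m ih =>
      rcases Nat.lt_or_ge i (m+1) with h | h
      · exact (ih (by omega)).trans (by rw [hBds m]; exact Finset.subset_union_left)
      · have : i = m + 1 := by omega
        subst this; exact Finset.Subset.refl _
  have hLnB : ∀ j w, w ∈ L (j+1) → w ∉ Bd j := by
    intro j w hw
    rw [hLs j] at hw
    exact (Finset.mem_filter.mp hw).2.1
  have hLt : ∀ j, L j ⊆ t := by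
    intro j
    cases j with
    | zero => simpa [hL0] using hv₀
    | succ m => rw [hLs m]; exact Finset.filter_subset _ _
  have hBdlev : ∀ m w, w ∈ Bd m → ∃ i ≤ m, w ∈ L i := by
    intro m
    induction m with
    | zero => intro w hw; exact ⟨0, le_refl _, hw⟩
    | succ j ih =>
      intro w hw
      rw [hBds j] at hw
      rcases Finset.mem_union.mp hw with h | h
      · obtain ⟨i, hi, hwi⟩ := ih w h; exact ⟨i, by omega, hwi⟩
      · exact ⟨j+1, le_refl _, h⟩
  have hclosure : ∀ j u, u ∈ L j → ∀ w, w ∈ t → G.Adj u w → w ∈ Bd (j+1) := by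
    intro j u hu w hwt hadj
    rw [hBds j]
    by_cases hwb : w ∈ Bd j
    · exact Finset.mem_union.mpr (Or.inl hwb)
    · refine Finset.mem_union.mpr (Or.inr ?_)
      rw [hLs j]
      exact Finset.mem_filter.mpr ⟨hwt, hwb, u, hu, hadj⟩
  -- two distinct vertices of the same level are connected by a short path below
  have TP : ∀ m, ∀ a ∈ L (m+1), ∀ b ∈ L (m+1), a ≠ b →
      ∃ p : G.Walk a b, p.IsPath ∧ p.length ≤ 2*(m+1) ∧
        (∀ x ∈ p.support, x = a ∨ x = b ∨ x ∈ Bd m) ∧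
        (∀ ed ∈ p.edges, ∃ x ∈ Bd m, x ∈ ed) := by
    -- common construction when parents coincide
    have twostep : ∀ m a b pa, a ≠ b → pa ∈ Bd m → a ∉ Bd m → b ∉ Bd m →
        G.Adj pa a → G.Adj pa b →
        ∃ p : G.Walk a b, p.IsPath ∧ p.length ≤ 2*(m+1) ∧
          (∀ x ∈ p.support, x = a ∨ x = b ∨ x ∈ Bd m) ∧
          (∀ ed ∈ p.edges, ∃ x ∈ Bd m, x ∈ ed) := by
      intro m a b pa hab hpaB haB hbB h1 h2
      have hapa : a ≠ pa := fun h => haB (h ▸ hpaB)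
      have hbpa : b ≠ pa := fun h => hbB (h ▸ hpaB)
      refine ⟨Walk.cons h1.symm (Walk.cons h2 Walk.nil), ?_, ?_, ?_, ?_⟩
      · simp [Walk.isPath_def, hapa, hbpa.symm, hab]
      · simp
      · intro x hx
        simp only [Walk.support_cons, Walk.support_nil, List.mem_cons] at hx
        rcases hx with rfl | hx
        · exact Or.inl rfl
        rcases hx with rfl | hx
        · exact Or.inr (Or.inr hpaB)
        rcases hx with rfl | hx
        · exact Or.inr (Or.inl rfl)
        · simp at hx
      · intro ed hed
        simp only [Walk.edges_cons, Walk.edges_nil, List.mem_cons] at hed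
        rcases hed with rfl | hed
        · exact ⟨pa, hpaB, by simp⟩
        rcases hed with rfl | hed
        · exact ⟨pa, hpaB, by simp⟩
        · simp at hed
    intro m
    induction m with
    | zero =>
      intro a ha b hb hab
      obtain ⟨-, haB, u, hu, hadju⟩ := Finset.mem_filter.mp ((hLs 0) ▸ ha)
      obtain ⟨-, hbB, u', hu', hadju'⟩ := Finset.mem_filter.mp ((hLs 0) ▸ hb)
      rw [hL0, Finset.mem_singleton] at hu hu'
      have h1 : G.Adj v₀ a := by rwa [hu] at hadju
      have h2 : G.Adj v₀ b := by rwa [hu'] at hadju'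
      exact twostep 0 a b v₀ hab (by rw [hBd0]; exact Finset.mem_singleton_self _) haB hbB h1 h2
    | succ m ih =>
      intro a ha b hb hab
      obtain ⟨-, haB, pa, hpa, hadja⟩ := Finset.mem_filter.mp ((hLs (m+1)) ▸ ha)
      obtain ⟨-, hbB, pb, hpb, hadjb⟩ := Finset.mem_filter.mp ((hLs (m+1)) ▸ hb)
      by_cases hpp : pa = pb
      · subst hpp
        exact twostep (m+1) a b pa hab (hLB _ hpa) haB hbB hadja hadjb
      · obtain ⟨p', hp'path, hp'len, hp'supp, hp'edge⟩ := ih pa hpa pb hpb hpp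
        have hbBm : b ∉ Bd m := fun h => hbB (hBmono m (m+1) (by omega) h)
        have haBm : a ∉ Bd m := fun h => haB (hBmono m (m+1) (by omega) h)
        have hbsupp : b ∉ p'.support := by
          intro hbs
          rcases hp'supp b hbs with rfl | rfl | h
          · exact hbB (hLB _ hpa)
          · exact hbB (hLB _ hpb)
          · exact hbBm h
        have hasupp : a ∉ p'.support := by
          intro has
          rcases hp'supp a has with rfl | rfl | h
          · exact haB (hLB _ hpa)
          · exact haB (hLB _ hpb)
          · exact haBm h
        have hq' : (p'.concat hadjb).IsPath := stmt7_isPath_concat hp'path hadjb hbsupp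
        refine ⟨Walk.cons hadja.symm (p'.concat hadjb), ?_, ?_, ?_, ?_⟩
        · refine Walk.IsPath.cons hq' ?_
          rw [Walk.support_concat]
          intro h
          rcases List.mem_append.mp h with h | h
          · exact hasupp h
          · exact hab (by simpa using h)
        · rw [Walk.length_cons, Walk.length_concat]; omega
        · intro x hx
          rw [Walk.support_cons] at hx
          rcases List.mem_cons.mp hx with rfl | hx
          · exact Or.inl rfl
          rcases List.mem_append.mp (by rwa [Walk.support_concat] at hx) with h | h
          · rcases hp'supp x h with rfl | rfl | h'
            · exact Or.inr (Or.inr (hLB _ hpa))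
            · exact Or.inr (Or.inr (hLB _ hpb))
            · exact Or.inr (Or.inr (hBmono m (m+1) (by omega) h'))
          · exact Or.inr (Or.inl (by simpa using h))
        · intro ed hed
          rw [Walk.edges_cons] at hed
          rcases List.mem_cons.mp hed with rfl | hed
          · exact ⟨pa, hLB _ hpa, by simp⟩
          rcases stmt7_mem_concat.mp (by rwa [Walk.edges_concat] at hed) with h | h
          · obtain ⟨x, hx, hxe⟩ := hp'edge ed h
            exact ⟨x, hBmono m (m+1) (by omega) hx, hxe⟩
          · have : ed = s(pb, b) := by simpa using h
            exact ⟨pb, hLB _ hpb, by rw [this]; simp⟩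
  have C2 : ∀ j, j + 1 ≤ k → ∀ a ∈ L j, ∀ b ∈ L j, ¬ G.Adj a b := by
    intro j hjk a ha b hb hadj
    have hab : a ≠ b := fun h => G.irrefl (h ▸ hadj)
    cases j with
    | zero =>
      rw [hL0, Finset.mem_singleton] at ha hb
      exact hab (ha.trans hb.symm)
    | succ m =>
      obtain ⟨p, hpath, hlen, hsupp, hedge⟩ := TP m a ha b hb hab
      have hcyc : (Walk.cons hadj.symm p).IsCycle := by
        rw [Walk.cons_isCycle_iff]
        refine ⟨hpath, fun hmem => ?_⟩
        obtain ⟨x, hxB, hxe⟩ := hedge _ hmem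
        rcases Sym2.mem_iff.mp hxe with rfl | rfl
        · exact hLnB m x hb hxB
        · exact hLnB m x ha hxB
      exact hns b (Walk.cons hadj.symm p) hcyc (by rw [Walk.length_cons]; omega)
  have C1 : ∀ j, j + 1 ≤ k → ∀ w, w ∉ Bd j → ((L j).filter (G.Adj w)).card ≤ 1 := by
    intro j hjk w hwB
    by_contra hcard
    obtain ⟨a, ha, b, hb, hab⟩ :=
      Finset.one_lt_card.mp (show 1 < ((L j).filter (G.Adj w)).card by omega)
    obtain ⟨haL, haw⟩ := Finset.mem_filter.mp ha
    obtain ⟨hbL, hbw⟩ := Finset.mem_filter.mp hb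
    cases j with
    | zero =>
      rw [hL0, Finset.mem_singleton] at haL hbL
      exact hab (haL.trans hbL.symm)
    | succ m =>
      obtain ⟨p, hpath, hlen, hsupp, hedge⟩ := TP m a haL b hbL hab
      have hwa : w ≠ a := fun h => hwB (h ▸ hLB _ haL)
      have hwb : w ≠ b := fun h => hwB (h ▸ hLB _ hbL)
      have hwBm : w ∉ Bd m := fun h => hwB (hBmono m (m+1) (by omega) h)
      have hwsupp : w ∉ p.support := by
        intro h
        rcases hsupp w h with rfl | rfl | h'
        · exact hwa rfl
        · exact hwb rfl
        · exact hwBm h'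
      have hq : (p.concat hbw.symm).IsPath := stmt7_isPath_concat hpath hbw.symm hwsupp
      have hcyc : (Walk.cons haw (p.concat hbw.symm)).IsCycle := by
        rw [Walk.cons_isCycle_iff]
        refine ⟨hq, fun hmem => ?_⟩
        rw [Walk.edges_concat] at hmem
        rcases stmt7_mem_concat.mp hmem with h | h
        · obtain ⟨x, hxB, hxe⟩ := hedge _ h
          rcases Sym2.mem_iff.mp hxe with rfl | rfl
          · exact hwBm hxB
          · exact hLnB m x haL hxB
        · rcases Sym2.eq_iff.mp h with ⟨h1, h2⟩ | ⟨h1, h2⟩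
          · exact hwb h1
          · exact hab h2
      exact hns w _ hcyc (by rw [Walk.length_cons, Walk.length_concat]; omega)
  have growth : ∀ j, j + 1 ≤ k → (D-1) * (L j).card ≤ (L (j+1)).card := by
    intro j hjk
    have hper : ∀ u ∈ L j, (D-1) ≤ ((L (j+1)).filter (G.Adj u)).card := by
      intro u hu
      have hut : u ∈ t := hLt j hu
      have hN : D ≤ (t.filter (G.Adj u)).card := hdeg u hut
      have hsplit : t.filter (G.Adj u) ⊆
          (L (j+1)).filter (G.Adj u) ∪ (L (j-1)).filter (G.Adj u) := by
        intro w hw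
        obtain ⟨hwt, hadj⟩ := Finset.mem_filter.mp hw
        have hwB : w ∈ Bd (j+1) := hclosure j u hu w hwt hadj
        obtain ⟨i, hi, hwi⟩ := hBdlev _ w hwB
        have hne_j : i ≠ j := by
          rintro rfl
          exact C2 i (by omega) u hu w hwi hadj
        have hge : j < i + 2 := by
          by_contra hle
          push_neg at hle
          have huB : u ∈ Bd (i+1) := hclosure i w hwi u hut hadj.symm
          have huB2 : u ∈ Bd (j-1) := hBmono (i+1) (j-1) (by omega) huB
          have hj1 : j - 1 + 1 = j := by omega
          exact hLnB (j-1) u (by rw [hj1]; exact hu) huB2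
        rcases Nat.lt_or_ge i j with hlt | hge2
        · obtain rfl : i = j - 1 := by omega
          exact Finset.mem_union.mpr (Or.inr (Finset.mem_filter.mpr ⟨hwi, hadj⟩))
        · obtain rfl : i = j + 1 := by omega
          exact Finset.mem_union.mpr (Or.inl (Finset.mem_filter.mpr ⟨hwi, hadj⟩))
      have h1 : ((L (j-1)).filter (G.Adj u)).card ≤ 1 := by
        rcases Nat.eq_zero_or_pos j with rfl | hj
        · calc ((L (0-1)).filter (G.Adj u)).card ≤ (L 0).card :=
              Finset.card_le_card (Finset.filter_subset _ _)
            _ = 1 := by rw [hL0, Finset.card_singleton]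
        · have hj1 : j - 1 + 1 = j := by omega
          exact C1 (j-1) (by omega) u (hLnB (j-1) u (by rw [hj1]; exact hu))
      have hD2 : D ≤ ((L (j+1)).filter (G.Adj u)).card + ((L (j-1)).filter (G.Adj u)).card :=
        le_trans hN (le_trans (Finset.card_le_card hsplit) (Finset.card_union_le _ _))
      omega
    calc (D-1) * (L j).card = ∑ _u ∈ L j, (D-1) := by
          rw [Finset.sum_const, smul_eq_mul, mul_comm]
      _ ≤ ∑ u ∈ L j, ((L (j+1)).filter (G.Adj u)).card := Finset.sum_le_sum hper
      _ = ∑ w ∈ L (j+1), ((L j).filter (G.Adj w)).card := stmt7_doublecount _ _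
      _ ≤ ∑ _w ∈ L (j+1), 1 := Finset.sum_le_sum (fun w hw => C1 j hjk w (hLnB j w hw))
      _ = (L (j+1)).card := by simp
  have powle : ∀ j, j ≤ k → (D-1)^j ≤ (L j).card := by
    intro j
    induction j with
    | zero => intro _; simp [hL0]
    | succ m ih =>
      intro hm
      calc (D-1)^(m+1) = (D-1) * (D-1)^m := by ring
        _ ≤ (D-1) * (L m).card := Nat.mul_le_mul_left _ (ih (by omega))
        _ ≤ (L (m+1)).card := growth m hm
  calc (D-1)^k ≤ (L k).card := powle k (le_refl k)
    _ ≤ Fintype.card V := Finset.card_le_univ _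

noncomputable def stmt7_edgesIn (G : SimpleGraph V) (t : Finset V) : Finset (Sym2 V) :=
  G.edgeFinset.filter (fun e => ∀ x ∈ e, x ∈ t)

lemma stmt7_edgesIn_empty (G : SimpleGraph V) : stmt7_edgesIn G (∅ : Finset V) = ∅ := by
  ext e
  induction e with
  | _ x y =>
    simp only [stmt7_edgesIn, Finset.mem_filter, Finset.notMem_empty, iff_false]
    rintro ⟨-, h⟩
    exact h x (Sym2.mem_mk_left x y)

lemma stmt7_edgesIn_split (G : SimpleGraph V) (t : Finset V) {v : V} (hv : v ∈ t) :
    (stmt7_edgesIn G t).card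
      ≤ (stmt7_edgesIn G (t.erase v)).card + (t.filter (G.Adj v)).card := by
  have hsplit := Finset.card_filter_add_card_filter_not
    (s := stmt7_edgesIn G t) (p := fun e => v ∈ e)
  have h1 : (stmt7_edgesIn G t).filter (fun e => ¬ v ∈ e) ⊆ stmt7_edgesIn G (t.erase v) := by
    intro e he
    obtain ⟨he1, he2⟩ := Finset.mem_filter.mp he
    obtain ⟨hedge, hall⟩ := Finset.mem_filter.mp he1
    refine Finset.mem_filter.mpr ⟨hedge, fun x hx => ?_⟩
    exact Finset.mem_erase.mpr ⟨fun hxv => he2 (hxv ▸ hx), hall x hx⟩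
  have h2 : (stmt7_edgesIn G t).filter (fun e => v ∈ e)
      = (t.filter (G.Adj v)).image (fun w => s(v, w)) := by
    ext e
    constructor
    · intro he
      obtain ⟨he1, he2⟩ := Finset.mem_filter.mp he
      obtain ⟨hedge, hall⟩ := Finset.mem_filter.mp he1
      obtain ⟨w, rfl⟩ := Sym2.mem_iff_exists.mp he2
      refine Finset.mem_image.mpr ⟨w, Finset.mem_filter.mpr ⟨hall w (Sym2.mem_mk_right v w), ?_⟩, rfl⟩
      exact (SimpleGraph.mem_edgeSet G).mp (SimpleGraph.mem_edgeFinset.mp hedge)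
    · intro he
      obtain ⟨w, hw, rfl⟩ := Finset.mem_image.mp he
      obtain ⟨hwt, hadj⟩ := Finset.mem_filter.mp hw
      refine Finset.mem_filter.mpr ⟨Finset.mem_filter.mpr ⟨?_, ?_⟩, Sym2.mem_mk_left v w⟩
      · exact SimpleGraph.mem_edgeFinset.mpr ((SimpleGraph.mem_edgeSet G).mpr hadj)
      · intro x hx
        rcases Sym2.mem_iff.mp hx with rfl | rfl
        · exact hv
        · exact hwt
  calc (stmt7_edgesIn G t).card
      = ((stmt7_edgesIn G t).filter (fun e => v ∈ e)).card
        + ((stmt7_edgesIn G t).filter (fun e => ¬ v ∈ e)).card := hsplit.symm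
    _ ≤ (t.filter (G.Adj v)).card + (stmt7_edgesIn G (t.erase v)).card :=
        Nat.add_le_add (by rw [h2]; exact Finset.card_image_le) (Finset.card_le_card h1)
    _ = _ := Nat.add_comm _ _

lemma stmt7_degeneracy (G : SimpleGraph V) (D : ℕ)
    (h : ∀ s : Finset V, s.Nonempty → ∃ v ∈ s, (s.filter (G.Adj v)).card < D) :
    ∀ t : Finset V, (stmt7_edgesIn G t).card ≤ D * t.card := by
  intro t
  induction t using Finset.strongInductionOn with
  | _ t ih =>
    rcases Finset.eq_empty_or_nonempty t with rfl | htne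
    · simp [stmt7_edgesIn_empty]
    · obtain ⟨v, hvt, hvdeg⟩ := h t htne
      have hstep := stmt7_edgesIn_split G t hvt
      have hih := ih (t.erase v) (Finset.erase_ssubset hvt)
      have hcard : (t.erase v).card = t.card - 1 := Finset.card_erase_of_mem hvt
      have ht1 : 1 ≤ t.card := Finset.card_pos.mpr htne
      calc (stmt7_edgesIn G t).card
          ≤ (stmt7_edgesIn G (t.erase v)).card + (t.filter (G.Adj v)).card := hstep
        _ ≤ D * (t.card - 1) + (D - 1) := by rw [← hcard]; omega
        _ ≤ D * t.card := by
            have hEq : D * (t.card - 1) + D = D * t.card := by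
              rw [← Nat.mul_succ, Nat.succ_eq_add_one, Nat.sub_add_cancel ht1]
            omega

lemma stmt7_edgesIn_univ (G : SimpleGraph V) :
    stmt7_edgesIn G (Finset.univ : Finset V) = G.edgeFinset := by
  simp [stmt7_edgesIn]

lemma stmt7_girth_real {G : SimpleGraph V} {k : ℕ} (hk : 1 ≤ k) (hns : stmt7_NSC G k) :
    (G.edgeSet.ncard : ℝ) ≤ 4 * (Fintype.card V : ℝ) ^ (1 + 1/(k:ℝ)) := by
  classical
  have hncf : G.edgeSet.ncard = G.edgeFinset.card := by
    simp [Set.ncard_eq_toFinset_card', SimpleGraph.edgeFinset]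
  rw [hncf]
  have hkR : (0:ℝ) < (k:ℝ) := by exact_mod_cast hk
  have hexp : (0:ℝ) < 1 + 1/(k:ℝ) := by positivity
  rcases Nat.eq_zero_or_pos (Fintype.card V) with hn0 | hnpos
  · have hE : IsEmpty V := Fintype.card_eq_zero_iff.mp hn0
    have h0 : G.edgeFinset = ∅ := Finset.eq_empty_of_isEmpty _
    rw [h0, hn0]
    simp only [Nat.cast_zero, Real.zero_rpow (ne_of_gt hexp), Finset.card_empty,
      Nat.cast_zero, mul_zero, le_refl]
  · set n := Fintype.card V with hn
    have hPex : ∃ M : ℕ, n < (M+1)^k := ⟨n, by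
      calc n < n + 1 := Nat.lt_succ_self n
        _ ≤ (n+1)^k := Nat.le_self_pow (by omega) _⟩
    set M := Nat.find hPex with hM
    have hPM : n < (M+1)^k := Nat.find_spec hPex
    have hdeg : ∀ s : Finset V, s.Nonempty → ∃ v ∈ s, (s.filter (G.Adj v)).card < M + 2 := by
      intro s hsne
      by_contra hcon
      push_neg at hcon
      have := stmt7_ball hk hns s hsne hcon
      have h21 : M + 2 - 1 = M + 1 := by omega
      rw [h21] at this
      omega
    have hedge : G.edgeFinset.card ≤ (M+2) * n := by
      have := stmt7_degeneracy G (M+2) hdeg Finset.univ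
      rwa [stmt7_edgesIn_univ, Finset.card_univ] at this
    have hnR : (0:ℝ) < (n:ℝ) := by exact_mod_cast hnpos
    have hMle : (M:ℝ) ≤ (n:ℝ) ^ (1/(k:ℝ)) := by
      rcases Nat.eq_zero_or_pos M with hM0 | hMpos
      · rw [hM0]
        simpa using Real.rpow_nonneg hnR.le (1/(k:ℝ))
      · have hmin := Nat.find_min hPex (show M - 1 < M by omega)
        push_neg at hmin
        have hMk : (M:ℕ)^k ≤ n := by
          have : M - 1 + 1 = M := by omega
          rwa [this] at hmin
        have h1 : ((M:ℝ)^(k:ℕ)) ≤ (n:ℝ) := by exact_mod_cast hMk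
        have h2 : ((M:ℝ)^(k:ℕ))^(1/(k:ℝ)) ≤ (n:ℝ)^(1/(k:ℝ)) :=
          Real.rpow_le_rpow (by positivity) h1 (by positivity)
        rwa [← Real.rpow_natCast (M:ℝ) k, ← Real.rpow_mul (by positivity),
          mul_one_div, div_self (ne_of_gt hkR), Real.rpow_one] at h2
    have hone : (1:ℝ) ≤ (n:ℝ) ^ (1/(k:ℝ)) := by
      have : (1:ℝ) ≤ (n:ℝ) := by exact_mod_cast hnpos
      calc (1:ℝ) = 1 ^ (1/(k:ℝ)) := (Real.one_rpow _).symm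
        _ ≤ (n:ℝ) ^ (1/(k:ℝ)) := Real.rpow_le_rpow (by norm_num) this (by positivity)
    have hsplitpow : (n:ℝ) ^ (1 + 1/(k:ℝ)) = (n:ℝ) * (n:ℝ) ^ (1/(k:ℝ)) := by
      rw [Real.rpow_add hnR, Real.rpow_one]
    calc (G.edgeFinset.card : ℝ) ≤ ((M+2) * n : ℕ) := by exact_mod_cast hedge
      _ = ((M:ℝ) + 2) * (n:ℝ) := by push_cast; ring
      _ ≤ ((n:ℝ) ^ (1/(k:ℝ)) + 2) * (n:ℝ) := by
          apply mul_le_mul_of_nonneg_right _ (le_of_lt hnR)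
          linarith
      _ ≤ (3 * (n:ℝ) ^ (1/(k:ℝ))) * (n:ℝ) := by
          apply mul_le_mul_of_nonneg_right _ (le_of_lt hnR)
          linarith
      _ ≤ 4 * (n:ℝ) ^ (1 + 1/(k:ℝ)) := by
          rw [hsplitpow]
          have h4 : (3:ℝ) * (n:ℝ) ^ (1/(k:ℝ)) * (n:ℝ) = 3 * ((n:ℝ) * (n:ℝ) ^ (1/(k:ℝ))) := by ring
          rw [h4]
          have hpos : (0:ℝ) ≤ (n:ℝ) * (n:ℝ) ^ (1/(k:ℝ)) := by positivity
          linarith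

lemma stmt7_sum_weights {𝒞 : Type} (R : Finset 𝒞) {m : ℕ} (hm : 1 ≤ m) :
    ∑ S ∈ R.powerset, (m-1)^(R.card - S.card) = m^R.card := by
  classical
  have h := Finset.prod_add (fun _ : 𝒞 => (1:ℕ)) (fun _ => m-1) R
  simp only [Finset.prod_const, one_pow, one_mul] at h
  have hm' : 1 + (m-1) = m := by omega
  rw [hm'] at h
  rw [h]
  apply Finset.sum_congr rfl
  intro S hS
  rw [Finset.card_sdiff_of_subset (Finset.mem_powerset.mp hS)]

lemma stmt7_bernoulli (f : ℕ) (hf : 1 ≤ f) : (2*f)^f ≤ 2 * (2*f-1)^f := by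
  have hx : (2:ℝ) ≤ (2*f:ℝ) := by
    have : (1:ℝ) ≤ (f:ℝ) := by exact_mod_cast hf
    linarith
  have hxpos : (0:ℝ) < (2*f:ℝ) := by linarith
  have hb := one_add_mul_le_pow (a := -(1/(2*f:ℝ))) (by
    rw [neg_le, neg_neg]
    calc (1:ℝ)/(2*f:ℝ) ≤ 1 := by
          rw [div_le_one hxpos]; linarith
      _ ≤ 2 := by norm_num) f
  have hhalf : (1:ℝ)/2 ≤ (1 - 1/(2*f:ℝ))^f := by
    have h1 : (1:ℝ) + f * (-(1/(2*f:ℝ))) = 1/2 := by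
      field_simp
      ring
    calc (1:ℝ)/2 = 1 + f * (-(1/(2*f:ℝ))) := h1.symm
      _ ≤ (1 + -(1/(2*f:ℝ)))^f := hb
      _ = (1 - 1/(2*f:ℝ))^f := by ring_nf
  have hprod : ((2*f:ℝ)) * (1 - 1/(2*f:ℝ)) = (2*f:ℝ) - 1 := by
    field_simp
  have hmain : ((2*f:ℝ))^f ≤ 2 * ((2*f:ℝ) - 1)^f := by
    calc ((2*f:ℝ))^f = 2 * (((2*f:ℝ))^f * (1/2)) := by ring
      _ ≤ 2 * (((2*f:ℝ))^f * (1 - 1/(2*f:ℝ))^f) := by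
          apply mul_le_mul_of_nonneg_left _ (by norm_num)
          apply mul_le_mul_of_nonneg_left hhalf (by positivity)
      _ = 2 * (((2*f:ℝ)) * (1 - 1/(2*f:ℝ)))^f := by rw [← mul_pow]
      _ = 2 * ((2*f:ℝ) - 1)^f := by rw [hprod]
  have hcast : ((2*f-1:ℕ):ℝ) = (2*f:ℝ) - 1 := by
    have : (1:ℕ) ≤ 2*f := by omega
    push_cast [this]
    ring
  have : ((2*f)^f : ℝ) ≤ ((2 * (2*f-1)^f : ℕ) : ℝ) := by
    rw [Nat.cast_mul, Nat.cast_pow, hcast]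
    exact_mod_cast hmain
  exact_mod_cast this

lemma stmt7_select {E 𝒞 : Type} [DecidableEq E] [DecidableEq 𝒞] (Efin : Finset E) (c : E → 𝒞)
    (F : E → Finset 𝒞) (f : ℕ) (hf : 1 ≤ f)
    (hFcard : ∀ e, (F e).card ≤ f) (hFc : ∀ e ∈ Efin, c e ∉ F e) :
    ∃ S : Finset 𝒞,
      Efin.card ≤ 4 * f * (Efin.filter (fun e => c e ∈ S ∧ ∀ χ ∈ F e, χ ∉ S)).card := by
  classical
  set m := 2*f with hmdef
  have hm : 2 ≤ m := by omega
  set R : Finset 𝒞 := Efin.image c ∪ Efin.biUnion F with hR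
  set w : Finset 𝒞 → ℕ := fun S => (m-1)^(R.card - S.card) with hw
  set kept : Finset 𝒞 → Finset E :=
    (fun S => Efin.filter (fun e => c e ∈ S ∧ ∀ χ ∈ F e, χ ∉ S)) with hkept
  -- per-edge weighted count
  have K2 : ∀ e ∈ Efin,
      (m-1)^f * m^(R.card) ≤
        m^(f+1) * ∑ S ∈ R.powerset.filter (fun S => c e ∈ S ∧ ∀ χ ∈ F e, χ ∉ S), w S := by
    intro e he
    have hceR : c e ∈ R := Finset.mem_union.mpr (Or.inl (Finset.mem_image_of_mem c he))
    have hFeR : F e ⊆ R := fun χ hχ =>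
      Finset.mem_union.mpr (Or.inr (Finset.mem_biUnion.mpr ⟨e, he, hχ⟩))
    have hcA : c e ∉ F e := hFc e he
    set A : Finset 𝒞 := insert (c e) (F e) with hA
    have hAR : A ⊆ R := Finset.insert_subset hceR hFeR
    have hAcard : A.card = (F e).card + 1 := Finset.card_insert_of_notMem hcA
    set R₀ : Finset 𝒞 := R \ A with hR₀
    have hR₀card : R.card = R₀.card + (F e).card + 1 := by
      have h1 : R₀.card = R.card - A.card := by rw [hR₀]; exact Finset.card_sdiff_of_subset hAR
      have hAle := Finset.card_le_card hAR
      omega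
    -- reindex the sum
    have hbij : ∑ S ∈ R.powerset.filter (fun S => c e ∈ S ∧ ∀ χ ∈ F e, χ ∉ S), w S
        = ∑ S' ∈ R₀.powerset, (m-1)^(R.card - (S'.card + 1)) := by
      apply Finset.sum_nbij' (i := fun S => S.erase (c e)) (j := fun S' => insert (c e) S')
      · intro S hS
        simp only [Finset.mem_filter, Finset.mem_powerset] at hS
        obtain ⟨hSR, hcS, hFS⟩ := hS
        refine Finset.mem_powerset.mpr (fun x hx => ?_)
        obtain ⟨hxne, hxS⟩ := Finset.mem_erase.mp hx
        refine Finset.mem_sdiff.mpr ⟨hSR hxS, fun hxA => ?_⟩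
        rcases Finset.mem_insert.mp hxA with rfl | hxF
        · exact hxne rfl
        · exact hFS x hxF hxS
      · intro S' hS'
        have hS'R₀ : S' ⊆ R₀ := Finset.mem_powerset.mp hS'
        simp only [Finset.mem_filter, Finset.mem_powerset]
        refine ⟨?_, ?_, ?_⟩
        · exact Finset.insert_subset hceR (fun x hx => (Finset.mem_sdiff.mp (hS'R₀ hx)).1)
        · exact Finset.mem_insert_self _ _
        · intro χ hχ hmem
          rcases Finset.mem_insert.mp hmem with rfl | hχS'
          · exact hcA hχ
          · exact (Finset.mem_sdiff.mp (hS'R₀ hχS')).2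
              (Finset.mem_insert.mpr (Or.inr hχ))
      · intro S hS
        simp only [Finset.mem_filter, Finset.mem_powerset] at hS
        exact Finset.insert_erase hS.2.1
      · intro S' hS'
        have hS'R₀ : S' ⊆ R₀ := Finset.mem_powerset.mp hS'
        apply Finset.erase_insert
        intro hmem
        exact (Finset.mem_sdiff.mp (hS'R₀ hmem)).2 (Finset.mem_insert_self _ _)
      · intro S hS
        simp only [Finset.mem_filter, Finset.mem_powerset] at hS
        have hcS : c e ∈ S := hS.2.1
        have hcard : (S.erase (c e)).card = S.card - 1 := Finset.card_erase_of_mem hcS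
        have hSpos : 1 ≤ S.card := Finset.card_pos.mpr ⟨c e, hcS⟩
        simp only [hw, hcard]
        congr 1
        omega
    rw [hbij]
    have hsum2 : ∑ S' ∈ R₀.powerset, (m-1)^(R.card - (S'.card + 1))
        = (m-1)^((F e).card) * m^(R₀.card) := by
      rw [← stmt7_sum_weights R₀ (by omega), Finset.mul_sum]
      apply Finset.sum_congr rfl
      intro S' hS'
      rw [← pow_add]
      congr 1
      have := Finset.card_le_card (Finset.mem_powerset.mp hS')
      omega
    rw [hsum2]
    -- (m-1)^f * m^(R₀ + fe + 1) ≤ m^(f+1) * ((m-1)^fe * m^R₀)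
    set fe := (F e).card with hfe
    have hfef : fe ≤ f := hFcard e
    have hkey : (m-1)^f * m^(fe+1) ≤ m^(f+1) * (m-1)^fe := by
      have hsplit : f = fe + (f - fe) := by omega
      have hee : fe + (f - fe) = f := by omega
      have hps : (m-1)^f = (m-1)^fe * (m-1)^(f-fe) := by
        rw [← pow_add, hee]
      calc (m-1)^f * m^(fe+1)
          = (m-1)^fe * ((m-1)^(f-fe) * m^(fe+1)) := by
            rw [hps]; ring
        _ ≤ (m-1)^fe * (m^(f-fe) * m^(fe+1)) := by
            apply Nat.mul_le_mul_left
            apply Nat.mul_le_mul_right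
            exact Nat.pow_le_pow_left (by omega) _
        _ = m^(f+1) * (m-1)^fe := by
            rw [← pow_add]
            have : f - fe + (fe + 1) = f + 1 := by omega
            rw [this]; ring
    have hee2 : (fe + 1) + R₀.card = R.card := by omega
    have hps2 : m^(R.card) = m^(fe+1) * m^(R₀.card) := by
      rw [← pow_add, hee2]
    calc (m-1)^f * m^(R.card) = (m-1)^f * m^(fe+1) * m^(R₀.card) := by
          rw [hps2]; ring
      _ ≤ m^(f+1) * (m-1)^fe * m^(R₀.card) :=
          Nat.mul_le_mul_right _ hkey
      _ = m^(f+1) * ((m-1)^fe * m^(R₀.card)) := by ring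
  -- swap the double sum
  have K3 : ∑ S ∈ R.powerset, w S * (kept S).card
      = ∑ e ∈ Efin, ∑ S ∈ R.powerset.filter (fun S => c e ∈ S ∧ ∀ χ ∈ F e, χ ∉ S), w S := by
    have h1 : ∀ S, (kept S).card = ∑ e ∈ Efin,
        (if c e ∈ S ∧ ∀ χ ∈ F e, χ ∉ S then 1 else 0) := by
      intro S
      rw [hkept]
      rw [Finset.card_filter]
    calc ∑ S ∈ R.powerset, w S * (kept S).card
        = ∑ S ∈ R.powerset, ∑ e ∈ Efin,
            (if c e ∈ S ∧ ∀ χ ∈ F e, χ ∉ S then w S else 0) := by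
          apply Finset.sum_congr rfl
          intro S _
          rw [h1, Finset.mul_sum]
          apply Finset.sum_congr rfl
          intro e _
          by_cases h : c e ∈ S ∧ ∀ χ ∈ F e, χ ∉ S
          · simp [h]
          · simp [h]
      _ = ∑ e ∈ Efin, ∑ S ∈ R.powerset,
            (if c e ∈ S ∧ ∀ χ ∈ F e, χ ∉ S then w S else 0) := Finset.sum_comm
      _ = _ := by
          apply Finset.sum_congr rfl
          intro e _
          rw [Finset.sum_filter]
          apply Finset.sum_congr rfl
          intro S _
          congr 1
  -- choose the best S
  have hRne : R.powerset.Nonempty := ⟨∅, Finset.empty_mem_powerset R⟩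
  obtain ⟨S₀, hS₀mem, hS₀max⟩ := Finset.exists_max_image R.powerset (fun S => (kept S).card) hRne
  have htotal : Efin.card * ((m-1)^f * m^(R.card))
      ≤ m^(f+1) * (m^(R.card) * (kept S₀).card) := by
    calc Efin.card * ((m-1)^f * m^(R.card))
        = ∑ _e ∈ Efin, (m-1)^f * m^(R.card) := by rw [Finset.sum_const, smul_eq_mul]
      _ ≤ ∑ e ∈ Efin, m^(f+1) *
            ∑ S ∈ R.powerset.filter (fun S => c e ∈ S ∧ ∀ χ ∈ F e, χ ∉ S), w S :=
          Finset.sum_le_sum K2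
      _ = m^(f+1) * ∑ S ∈ R.powerset, w S * (kept S).card := by
          rw [K3, Finset.mul_sum]
      _ ≤ m^(f+1) * ∑ S ∈ R.powerset, w S * (kept S₀).card := by
          apply Nat.mul_le_mul_left
          apply Finset.sum_le_sum
          intro S hS
          exact Nat.mul_le_mul_left _ (hS₀max S hS)
      _ = m^(f+1) * (m^(R.card) * (kept S₀).card) := by
          rw [← Finset.sum_mul, stmt7_sum_weights R (by omega)]
  refine ⟨S₀, ?_⟩
  -- cancel m^(R.card) and use Bernoulli
  have hcancel : Efin.card * (m-1)^f ≤ m^(f+1) * (kept S₀).card := by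
    have h1 : (Efin.card * (m-1)^f) * m^(R.card) ≤ (m^(f+1) * (kept S₀).card) * m^(R.card) := by
      calc (Efin.card * (m-1)^f) * m^(R.card)
          = Efin.card * ((m-1)^f * m^(R.card)) := by ring
        _ ≤ m^(f+1) * (m^(R.card) * (kept S₀).card) := htotal
        _ = (m^(f+1) * (kept S₀).card) * m^(R.card) := by ring
    exact Nat.le_of_mul_le_mul_right h1 (Nat.pow_pos (by omega))
  have hbern := stmt7_bernoulli f hf
  have h2 : Efin.card * m^f ≤ 2 * m^(f+1) * (kept S₀).card := by
    calc Efin.card * m^f ≤ Efin.card * (2 * (m-1)^f) := by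
          apply Nat.mul_le_mul_left
          simpa [hmdef] using hbern
      _ = 2 * (Efin.card * (m-1)^f) := by ring
      _ ≤ 2 * (m^(f+1) * (kept S₀).card) := Nat.mul_le_mul_left _ hcancel
      _ = 2 * m^(f+1) * (kept S₀).card := by ring
  have h3 : Efin.card * m^f ≤ (4 * f * (kept S₀).card) * m^f := by
    calc Efin.card * m^f ≤ 2 * m^(f+1) * (kept S₀).card := h2
      _ = (2 * m * (kept S₀).card) * m^f := by rw [pow_succ]; ring
      _ = (4 * f * (kept S₀).card) * m^f := by rw [hmdef]; ring
  exact Nat.le_of_mul_le_mul_right h3 (Nat.pow_pos (by omega))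

open SimpleGraph

/-- an edge-colored graph admitting a `2k`-blocking set in which every
edge appears in at most `f` pairs has `O(f·n^{1+1/k})` edges. -/
theorem stmt_7 :
    ∃ C : ℝ, 0 < C ∧
      ∀ (k f : ℕ), 1 ≤ k → 1 ≤ f →
        ∀ (V : Type) [Fintype V] [DecidableEq V] (𝒞 : Type) (H : SimpleGraph V)
          (c : Sym2 V → 𝒞) (B : Finset (Sym2 V × 𝒞)),
          -- `B` consists of pairs `(e, χ)` with `e ∈ E(H)` and `χ ≠ c(e)`
          (∀ p ∈ B, p.1 ∈ H.edgeSet ∧ p.2 ≠ c p.1) →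
          -- every cycle with at most `2k` edges is blocked by some pair of `B`
          (∀ (a : V) (W : H.Walk a a), W.IsCycle → W.length ≤ 2 * k →
            ∃ p ∈ B, p.1 ∈ W.edges ∧ ∃ e' ∈ W.edges, c e' = p.2) →
          -- every edge of `H` appears in at most `f` pairs of `B`
          (∀ e : Sym2 V, (B.filter (fun p => p.1 = e)).card ≤ f) →
          (H.edgeSet.ncard : ℝ) ≤ C * f * (Fintype.card V : ℝ) ^ (1 + 1 / (k : ℝ)) := by
  classical
  refine ⟨16, by norm_num, ?_⟩
  intro k f hk hf V _ _ 𝒞 H c B hB hblock hmult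
  classical
  set F : Sym2 V → Finset 𝒞 := fun e => (B.filter (fun p => p.1 = e)).image Prod.snd with hF
  have hFcard : ∀ e, (F e).card ≤ f := by
    intro e
    calc (F e).card ≤ (B.filter (fun p => p.1 = e)).card := Finset.card_image_le
      _ ≤ f := hmult e
  have hFc : ∀ e ∈ H.edgeFinset, c e ∉ F e := by
    intro e he hmem
    obtain ⟨p, hp, hp2⟩ := Finset.mem_image.mp hmem
    obtain ⟨hpB, hpe⟩ := Finset.mem_filter.mp hp
    exact (hB p hpB).2 (by rw [hpe]; exact hp2)
  obtain ⟨S₀, hsel⟩ := stmt7_select H.edgeFinset c F f hf hFcard hFc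
  set kept : Finset (Sym2 V) :=
    H.edgeFinset.filter (fun e => c e ∈ S₀ ∧ ∀ χ ∈ F e, χ ∉ S₀) with hkept
  have hkeptE : ∀ e ∈ kept, e ∈ H.edgeSet := by
    intro e he
    exact SimpleGraph.mem_edgeFinset.mp (Finset.mem_filter.mp he).1
  set G₀ : SimpleGraph V := SimpleGraph.fromEdgeSet (↑kept) with hG₀
  have hle : G₀ ≤ H := by
    rw [hG₀]
    calc SimpleGraph.fromEdgeSet (↑kept) ≤ SimpleGraph.fromEdgeSet H.edgeSet :=
          SimpleGraph.fromEdgeSet_mono (fun e he => hkeptE e (Finset.mem_coe.mp he))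
      _ = H := SimpleGraph.fromEdgeSet_edgeSet H
  have hedgeSet : G₀.edgeSet = (↑kept : Set (Sym2 V)) := by
    rw [hG₀, SimpleGraph.edgeSet_fromEdgeSet]
    ext e
    simp only [Set.mem_diff, Set.mem_setOf_eq, Finset.mem_coe, and_iff_left_iff_imp]
    intro he hdiag
    exact (H.not_isDiag_of_mem_edgeSet (hkeptE e he)) hdiag
  have hNSC : stmt7_NSC G₀ k := by
    intro a W hcyc hlen
    have hWkept : ∀ e ∈ W.edges, e ∈ kept := by
      intro e he
      have := W.edges_subset_edgeSet he
      rwa [hedgeSet, Finset.mem_coe] at this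
    have hWH : ∀ e ∈ W.edges, e ∈ H.edgeSet := fun e he => hkeptE e (hWkept e he)
    have hcyc' := hcyc.transfer hWH
    have hlen' : (W.transfer H hWH).length ≤ 2*k := by
      rw [Walk.length_transfer]; exact hlen
    obtain ⟨p, hpB, hpW, e', he'W, hce'⟩ := hblock a (W.transfer H hWH) hcyc' hlen'
    rw [Walk.edges_transfer] at hpW he'W
    have hp1 : p.1 ∈ kept := hWkept _ hpW
    have he'1 : e' ∈ kept := hWkept _ he'W
    obtain ⟨-, -, hforb⟩ := Finset.mem_filter.mp hp1
    obtain ⟨-, hcS, -⟩ := Finset.mem_filter.mp he'1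
    have hp2F : p.2 ∈ F p.1 := Finset.mem_image.mpr ⟨p, Finset.mem_filter.mpr ⟨hpB, rfl⟩, rfl⟩
    exact hforb p.2 hp2F (by rw [← hce']; exact hcS)
  have hgirth := stmt7_girth_real hk hNSC
  have hnc : H.edgeSet.ncard = H.edgeFinset.card := by
    simp [Set.ncard_eq_toFinset_card', SimpleGraph.edgeFinset]
  rw [hnc]
  calc (H.edgeFinset.card : ℝ) ≤ ((4*f*kept.card : ℕ) : ℝ) := by exact_mod_cast hsel
    _ = 4*(f:ℝ)*(kept.card : ℝ) := by push_cast; ring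
    _ = 4*(f:ℝ)*(G₀.edgeSet.ncard : ℝ) := by rw [hedgeSet, Set.ncard_coe_finset]
    _ ≤ 4*(f:ℝ)*(4 * (Fintype.card V : ℝ) ^ (1 + 1/(k:ℝ))) :=
        mul_le_mul_of_nonneg_left hgirth (by positivity)
    _ = 16 * (f:ℝ) * (Fintype.card V : ℝ) ^ (1 + 1/(k:ℝ)) := by ring
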